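/- For real $r, s \ge 0$ and $\phi \in \mathbb{R}$, $\max_\theta \left(|r e^{i\phi} + s e^{i\theta}| + |r + s e^{i\theta}|\right) = 2\sqrt{r^2 + s^2 + 2rs|\cos(\phi/2)|}$. -/

import Mathlib

open Complex Real

lemma key8 (r s α β : ℝ) :
    (‖(r:ℂ)*Complex.exp (α*Complex.I) + (s:ℂ)*Complex.exp (β*Complex.I)‖)^2
    = r^2+s^2+2*r*s*Real.cos (α-β) := by
  rw [Complex.sq_norm, Real.cos_sub]
  simp [Complex.normSq_apply, Complex.exp_ofReal_mul_I_re, Complex.exp_ofReal_mul_I_im]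
  nlinarith [Real.sin_sq_add_cos_sq α, Real.sin_sq_add_cos_sq β]

lemma key8' (r s β : ℝ) :
    (‖(r:ℂ) + (s:ℂ)*Complex.exp (β*Complex.I)‖)^2
    = r^2+s^2+2*r*s*Real.cos β := by
  have h := key8 r s 0 β
  simp only [Complex.ofReal_zero, zero_mul, Complex.exp_zero, mul_one, zero_sub,
    Real.cos_neg] at h
  exact h

lemma sqrt_eq_of_sq8 {x M : ℝ} (hx : 0 ≤ x) (h : x^2 = M) : Real.sqrt M = x := by
  rw [← h, Real.sqrt_sq hx]

theorem stmt_8 (r s φ : ℝ) (hr : 0 ≤ r) (hs : 0 ≤ s) :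
    IsGreatest
      {x : ℝ | ∃ θ : ℝ, x =
        ‖(r : ℂ) * Complex.exp (φ * Complex.I) + (s : ℂ) * Complex.exp (θ * Complex.I)‖ +
        ‖(r : ℂ) + (s : ℂ) * Complex.exp (θ * Complex.I)‖}
      (2 * Real.sqrt (r ^ 2 + s ^ 2 + 2 * r * s * |Real.cos (φ / 2)|)) := by
  set M : ℝ := r ^ 2 + s ^ 2 + 2 * r * s * |Real.cos (φ / 2)| with hMdef
  have hM : 0 ≤ M := by positivity
  constructor
  · -- membership
    by_cases h : 0 ≤ Real.cos (φ/2)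
    · refine ⟨φ/2, ?_⟩
      push_cast
      have ha : (‖(r:ℂ)*Complex.exp (φ*Complex.I) + (s:ℂ)*Complex.exp ((φ:ℂ)/2*Complex.I)‖)^2 = M := by
        have := key8 r s φ (φ/2)
        push_cast at this
        rw [this]
        have h2 : φ - φ/2 = φ/2 := by ring
        rw [h2, hMdef, _root_.abs_of_nonneg h]
      have hb : (‖(r:ℂ) + (s:ℂ)*Complex.exp ((φ:ℂ)/2*Complex.I)‖)^2 = M := by
        have := key8' r s (φ/2)
        push_cast at this
        rw [this, hMdef, _root_.abs_of_nonneg h]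
      have ha' := sqrt_eq_of_sq8 (norm_nonneg _) ha
      have hb' := sqrt_eq_of_sq8 (norm_nonneg _) hb
      linarith [ha', hb']
    · refine ⟨φ/2 + π, ?_⟩
      push_cast
      have habs : |Real.cos (φ/2)| = -Real.cos (φ/2) := abs_of_neg (not_le.mp h)
      have ha : (‖(r:ℂ)*Complex.exp (φ*Complex.I) + (s:ℂ)*Complex.exp (((φ:ℂ)/2+(π:ℂ))*Complex.I)‖)^2 = M := by
        have := key8 r s φ (φ/2 + π)
        push_cast at this
        rw [this]
        have h2 : φ - (φ/2 + π) = -(π - φ/2) := by ring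
        rw [h2, Real.cos_neg, Real.cos_pi_sub, hMdef, habs]
      have hb : (‖(r:ℂ) + (s:ℂ)*Complex.exp (((φ:ℂ)/2+(π:ℂ))*Complex.I)‖)^2 = M := by
        have := key8' r s (φ/2 + π)
        push_cast at this
        rw [this, hMdef, habs]
        simp [Real.cos_add]
      have ha' := sqrt_eq_of_sq8 (norm_nonneg _) ha
      have hb' := sqrt_eq_of_sq8 (norm_nonneg _) hb
      linarith [ha', hb']
  · -- upper bound
    rintro x ⟨θ, rfl⟩
    set a := ‖(r:ℂ)*Complex.exp (φ*Complex.I) + (s:ℂ)*Complex.exp (θ*Complex.I)‖ with hadef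
    set b := ‖(r:ℂ) + (s:ℂ)*Complex.exp (θ*Complex.I)‖ with hbdef
    have ha2 : a^2 = r^2+s^2+2*r*s*Real.cos (φ-θ) := key8 r s φ θ
    have hb2 : b^2 = r^2+s^2+2*r*s*Real.cos θ := key8' r s θ
    have hcos : Real.cos (φ-θ) + Real.cos θ ≤ 2 * |Real.cos (φ/2)| := by
      have h1 : Real.cos (φ-θ) + Real.cos θ
          = 2 * Real.cos (φ/2) * Real.cos ((φ-2*θ)/2) := by
        rw [Real.cos_add_cos]
        ring_nf
      rw [h1]
      calc 2 * Real.cos (φ/2) * Real.cos ((φ-2*θ)/2)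
          ≤ |2 * Real.cos (φ/2) * Real.cos ((φ-2*θ)/2)| := le_abs_self _
        _ = 2 * |Real.cos (φ/2)| * |Real.cos ((φ-2*θ)/2)| := by
            rw [abs_mul, abs_mul]; norm_num
        _ ≤ 2 * |Real.cos (φ/2)| * 1 := by
            have := Real.abs_cos_le_one ((φ-2*θ)/2)
            nlinarith [abs_nonneg (Real.cos (φ/2))]
        _ = 2 * |Real.cos (φ/2)| := by ring
    have hsum : a^2 + b^2 ≤ 2 * M := by
      rw [ha2, hb2, hMdef]
      nlinarith [mul_nonneg hr hs]
    have ha0 : 0 ≤ a := norm_nonneg _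
    have hb0 : 0 ≤ b := norm_nonneg _
    nlinarith [Real.sq_sqrt hM, Real.sqrt_nonneg M, sq_nonneg (a-b), sq_nonneg (a+b-2*Real.sqrt M)]
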